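/- Let f be C² on [−1,1]×[−1,1] and define γ : [−1,1] → ℝ by γ(x) = x+1 for x < 0 and γ(x) = x−1 for x > 0 (arbitrary at 0). Then ∫_{−1}^1∫_{−1}^1 f(s,t) dt ds = 4f(0,0) − 2∫_{−1}^1 f_s(s,0)γ(s) ds − 2∫_{−1}^1 f_t(0,t)γ(t) dt + ∫_{−1}^1∫_{−1}^1 f_{st}(s,t)γ(s)γ(t) dt ds. -/

import Mathlib

open MeasureTheory Set

noncomputable def saw : ℝ → ℝ := fun x => if x < 0 then x + 1 else x - 1

lemma saw_meas : Measurable saw := by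
  unfold saw
  exact Measurable.ite measurableSet_Iio (by fun_prop) (by fun_prop)

lemma saw_bd : ∀ x ∈ Icc (-1:ℝ) 1, |saw x| ≤ 1 := by
  intro x hx
  unfold saw
  rcases lt_or_ge x 0 with h | h
  · rw [if_pos h, abs_le]; constructor <;> linarith [hx.1]
  · rw [if_neg (not_lt.mpr h), abs_le]; constructor <;> linarith [hx.2]

lemma saw_ae (γ : ℝ → ℝ) (hγneg : ∀ x : ℝ, x < 0 → γ x = x + 1)
    (hγpos : ∀ x : ℝ, 0 < x → γ x = x - 1) : ∀ x : ℝ, x ≠ 0 → γ x = saw x := by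
  intro x hx
  rcases lt_or_gt_of_ne hx with h | h
  · rw [hγneg x h]; unfold saw; rw [if_pos h]
  · rw [hγpos x h]; unfold saw; rw [if_neg (not_lt.mpr h.le)]

/-- Key 1D lemma: midpoint rule via sawtooth. -/
lemma key (g g' : ℝ → ℝ) (hg : ∀ x ∈ Icc (-1:ℝ) 1, HasDerivAt g (g' x) x)
    (hc : ContinuousOn g' (Icc (-1:ℝ) 1)) :
    ∫ x in (-1:ℝ)..1, g x = 2 * g 0 - ∫ x in (-1:ℝ)..1, g' x * saw x := by
  have h01 : Icc (0:ℝ) 1 ⊆ Icc (-1:ℝ) 1 := Icc_subset_Icc (by norm_num) le_rfl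
  have hm0 : Icc (-1:ℝ) 0 ⊆ Icc (-1:ℝ) 1 := Icc_subset_Icc le_rfl (by norm_num)
  have hu1 : uIcc (0:ℝ) 1 = Icc 0 1 := uIcc_of_le (by norm_num)
  have hu0 : uIcc (-1:ℝ) 0 = Icc (-1) 0 := uIcc_of_le (by norm_num)
  have hgc : ContinuousOn g (Icc (-1:ℝ) 1) :=
    fun x hx => (hg x hx).continuousAt.continuousWithinAt
  -- integrability of g' on pieces
  have hi0 : IntervalIntegrable g' volume (-1) 0 :=
    (hc.mono (hu0 ▸ hm0 : uIcc (-1:ℝ) 0 ⊆ Icc (-1:ℝ) 1)).intervalIntegrable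
  have hi1 : IntervalIntegrable g' volume 0 1 :=
    (hc.mono (hu1 ▸ h01 : uIcc (0:ℝ) 1 ⊆ Icc (-1:ℝ) 1)).intervalIntegrable
  -- IBP on [-1,0] with v = x+1
  have A : ∫ x in (-1:ℝ)..0, g x * 1 =
      g 0 * (0+1) - g (-1) * (-1+1) - ∫ x in (-1:ℝ)..0, g' x * (x + 1) := by
    apply intervalIntegral.integral_mul_deriv_eq_deriv_mul
      (u := g) (v := fun x => x + 1) (u' := g') (v' := fun _ => 1)
    · intro x hx; exact hg x (hm0 (hu0 ▸ hx))
    · intro x _; simpa using (hasDerivAt_id x).add_const 1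
    · exact hi0
    · exact intervalIntegrable_const
  -- IBP on [0,1] with v = x-1
  have B : ∫ x in (0:ℝ)..1, g x * 1 =
      g 1 * (1-1) - g 0 * (0-1) - ∫ x in (0:ℝ)..1, g' x * (x - 1) := by
    apply intervalIntegral.integral_mul_deriv_eq_deriv_mul
      (u := g) (v := fun x => x - 1) (u' := g') (v' := fun _ => 1)
    · intro x hx; exact hg x (h01 (hu1 ▸ hx))
    · intro x _; simpa using (hasDerivAt_id x).sub_const 1
    · exact hi1
    · exact intervalIntegrable_const
  simp only [mul_one] at A B
  -- rewrite saw integrals on pieces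
  have hC0 : ∫ x in (-1:ℝ)..0, g' x * saw x = ∫ x in (-1:ℝ)..0, g' x * (x + 1) := by
    apply intervalIntegral.integral_congr_ae
    have h0 : ∀ᵐ x : ℝ, x ≠ 0 := by
      have := Real.volume_singleton (a := (0:ℝ))
      rw [ae_iff]
      convert this using 2
      ext x; simp
    filter_upwards [h0] with x hx hmem
    rw [uIoc_of_le (by norm_num : (-1:ℝ) ≤ 0)] at hmem
    have hlt : x < 0 := lt_of_le_of_ne hmem.2 hx
    unfold saw
    rw [if_pos hlt]
  have hC1 : ∫ x in (0:ℝ)..1, g' x * saw x = ∫ x in (0:ℝ)..1, g' x * (x - 1) := by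
    apply intervalIntegral.integral_congr
    intro x hx
    rw [hu1] at hx
    show g' x * saw x = g' x * (x - 1)
    unfold saw
    rw [if_neg (not_lt.mpr hx.1)]
  -- integrability of g' * saw on pieces
  have hs0 : IntervalIntegrable (fun x => g' x * saw x) volume (-1) 0 := by
    have : IntervalIntegrable (fun x => g' x * (x+1)) volume (-1) 0 :=
      hi0.mul_continuousOn (by fun_prop)
    rw [intervalIntegrable_iff] at this ⊢
    apply this.congr
    have h0 : ∀ᵐ x : ℝ, x ≠ 0 := by
      have := Real.volume_singleton (a := (0:ℝ))
      rw [ae_iff]; convert this using 2; ext x; simp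
    filter_upwards [ae_restrict_of_ae h0, ae_restrict_mem measurableSet_uIoc] with x hx hmem
    rw [uIoc_of_le (by norm_num : (-1:ℝ) ≤ 0)] at hmem
    have hlt : x < 0 := lt_of_le_of_ne hmem.2 hx
    unfold saw
    rw [if_pos hlt]
  have hs1 : IntervalIntegrable (fun x => g' x * saw x) volume 0 1 := by
    have h1 : IntervalIntegrable (fun x => g' x * (x-1)) volume 0 1 :=
      hi1.mul_continuousOn (by fun_prop)
    rw [intervalIntegrable_iff] at h1 ⊢
    apply h1.congr
    filter_upwards [ae_restrict_mem measurableSet_uIoc] with x hx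
    rw [uIoc_of_le (by norm_num : (0:ℝ) ≤ 1)] at hx
    show g' x * (x - 1) = g' x * saw x
    unfold saw
    rw [if_neg (not_lt.mpr hx.1.le)]
  have hsplit1 : ∫ x in (-1:ℝ)..1, g x = (∫ x in (-1:ℝ)..0, g x) + ∫ x in (0:ℝ)..1, g x :=
    (intervalIntegral.integral_add_adjacent_intervals
      ((hgc.mono (hu0 ▸ hm0)).intervalIntegrable)
      ((hgc.mono (hu1 ▸ h01)).intervalIntegrable)).symm
  have hsplit2 : ∫ x in (-1:ℝ)..1, g' x * saw x =
      (∫ x in (-1:ℝ)..0, g' x * saw x) + ∫ x in (0:ℝ)..1, g' x * saw x :=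
    (intervalIntegral.integral_add_adjacent_intervals hs0 hs1).symm
  rw [hsplit1, hsplit2, hC0, hC1, A, B]
  ring

noncomputable abbrev μ1 : Measure ℝ := volume.restrict (Ioc (-1:ℝ) 1)

lemma box_int (F : ℝ → ℝ → ℝ)
    (hF : ContinuousOn (fun p : ℝ × ℝ => F p.1 p.2) (Icc (-1:ℝ) 1 ×ˢ Icc (-1:ℝ) 1))
    (g h : ℝ → ℝ) (hg : Measurable g) (hh : Measurable h)
    (hgb : ∀ x ∈ Icc (-1:ℝ) 1, |g x| ≤ 1) (hhb : ∀ x ∈ Icc (-1:ℝ) 1, |h x| ≤ 1) :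
    Integrable (fun p : ℝ × ℝ => F p.1 p.2 * g p.1 * h p.2) (μ1.prod μ1) := by
  have hsub : Ioc (-1:ℝ) 1 ×ˢ Ioc (-1:ℝ) 1 ⊆ Icc (-1:ℝ) 1 ×ˢ Icc (-1:ℝ) 1 :=
    prod_mono Ioc_subset_Icc_self Ioc_subset_Icc_self
  have hms : MeasurableSet (Ioc (-1:ℝ) 1 ×ˢ Ioc (-1:ℝ) 1) :=
    measurableSet_Ioc.prod measurableSet_Ioc
  have hrw : μ1.prod μ1 = volume.restrict (Ioc (-1:ℝ) 1 ×ˢ Ioc (-1:ℝ) 1) := by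
    rw [Measure.prod_restrict, ← Measure.volume_eq_prod]
  obtain ⟨C, hC⟩ := (isCompact_Icc.prod isCompact_Icc).exists_bound_of_continuousOn hF
  have hmeas : AEStronglyMeasurable (fun p : ℝ × ℝ => F p.1 p.2 * g p.1 * h p.2) (μ1.prod μ1) := by
    rw [hrw]
    exact (((hF.mono hsub).aestronglyMeasurable hms).mul
      ((hg.comp measurable_fst).aestronglyMeasurable)).mul
      ((hh.comp measurable_snd).aestronglyMeasurable)
  apply Integrable.mono' (integrable_const C) hmeas
  rw [hrw]
  filter_upwards [ae_restrict_mem hms] with p hp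
  have h1 := hC p (hsub hp)
  have h2 := hgb p.1 (hsub hp).1
  have h3 := hhb p.2 (hsub hp).2
  have h4 : ‖F p.1 p.2 * g p.1 * h p.2‖ = ‖F p.1 p.2‖ * |g p.1| * |h p.2| := by
    simp [Real.norm_eq_abs, abs_mul]
  rw [h4]
  have hn1 : (0:ℝ) ≤ ‖F p.1 p.2‖ := norm_nonneg _
  have e2 : ‖F p.1 p.2‖ * |g p.1| * |h p.2| ≤ ‖F p.1 p.2‖ * |g p.1| :=
    mul_le_of_le_one_right (mul_nonneg hn1 (abs_nonneg _)) h3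
  have e1 : ‖F p.1 p.2‖ * |g p.1| ≤ ‖F p.1 p.2‖ := mul_le_of_le_one_right hn1 h2
  linarith

lemma swap_box (F : ℝ → ℝ → ℝ)
    (hF : Integrable (fun p : ℝ × ℝ => F p.1 p.2) (μ1.prod μ1)) :
    ∫ s in (-1:ℝ)..1, ∫ t in (-1:ℝ)..1, F s t = ∫ t in (-1:ℝ)..1, ∫ s in (-1:ℝ)..1, F s t := by
  have hle : (-1:ℝ) ≤ 1 := by norm_num
  simp only [intervalIntegral.integral_of_le hle]
  exact integral_integral_swap hF

lemma marg_int (F : ℝ → ℝ → ℝ)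
    (hF : Integrable (fun p : ℝ × ℝ => F p.1 p.2) (μ1.prod μ1)) :
    IntervalIntegrable (fun s => ∫ t in (-1:ℝ)..1, F s t) volume (-1) 1 := by
  have hle : (-1:ℝ) ≤ 1 := by norm_num
  rw [intervalIntegrable_iff, uIoc_of_le hle]
  simp only [intervalIntegral.integral_of_le hle]
  exact hF.integral_prod_left

lemma ae_ne_zero : ∀ᵐ x : ℝ, x ≠ (0:ℝ) := by
  have := Real.volume_singleton (a := (0:ℝ))
  rw [ae_iff]; convert this using 2; ext x; simp

lemma line_int (g : ℝ → ℝ) (hg : ContinuousOn g (Icc (-1:ℝ) 1))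
    (h : ℝ → ℝ) (hh : Measurable h) (hhb : ∀ x ∈ Icc (-1:ℝ) 1, |h x| ≤ 1) :
    IntervalIntegrable (fun x => g x * h x) volume (-1) 1 := by
  rw [intervalIntegrable_iff, uIoc_of_le (by norm_num : (-1:ℝ) ≤ 1)]
  obtain ⟨C, hC⟩ := isCompact_Icc.exists_bound_of_continuousOn hg
  apply Integrable.mono' (integrable_const C)
  · exact ((hg.mono Ioc_subset_Icc_self).aestronglyMeasurable measurableSet_Ioc).mul
      hh.aestronglyMeasurable
  · filter_upwards [ae_restrict_mem measurableSet_Ioc] with x hx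
    have h1 := hC x (Ioc_subset_Icc_self hx)
    have h2 := hhb x (Ioc_subset_Icc_self hx)
    have : ‖g x * h x‖ = ‖g x‖ * |h x| := by simp [Real.norm_eq_abs, abs_mul]
    rw [this]
    have := mul_le_of_le_one_right (norm_nonneg (g x)) h2
    linarith

/-- Midpoint rule identity on the square [-1,1]² via the sawtooth γ. -/
theorem stmt_6 (f fs ft fst : ℝ → ℝ → ℝ)
(hfC : ContinuousOn (fun p : ℝ × ℝ => f p.1 p.2) (Icc (-1) 1 ×ˢ Icc (-1) 1))
    (hfs : ∀ s ∈ Icc (-1 : ℝ) 1, ∀ t ∈ Icc (-1 : ℝ) 1, HasDerivAt (fun s' => f s' t) (fs s t) s)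
    (hft : ∀ s ∈ Icc (-1 : ℝ) 1, ∀ t ∈ Icc (-1 : ℝ) 1, HasDerivAt (fun t' => f s t') (ft s t) t)
    (hfst : ∀ s ∈ Icc (-1 : ℝ) 1, ∀ t ∈ Icc (-1 : ℝ) 1, HasDerivAt (fun t' => fs s t') (fst s t) t)
    (hfsC : ContinuousOn (fun p : ℝ × ℝ => fs p.1 p.2) (Icc (-1) 1 ×ˢ Icc (-1) 1))
    (hftC : ContinuousOn (fun p : ℝ × ℝ => ft p.1 p.2) (Icc (-1) 1 ×ˢ Icc (-1) 1))
    (hfstC : ContinuousOn (fun p : ℝ × ℝ => fst p.1 p.2) (Icc (-1) 1 ×ˢ Icc (-1) 1))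
    (γ : ℝ → ℝ)
    (hγneg : ∀ x : ℝ, x < 0 → γ x = x + 1)
    (hγpos : ∀ x : ℝ, 0 < x → γ x = x - 1) :
    (∫ s in (-1 : ℝ)..1, ∫ t in (-1 : ℝ)..1, f s t) =
      4 * f 0 0
      - 2 * (∫ s in (-1 : ℝ)..1, fs s 0 * γ s)
      - 2 * (∫ t in (-1 : ℝ)..1, ft 0 t * γ t)
      + ∫ s in (-1 : ℝ)..1, ∫ t in (-1 : ℝ)..1, fst s t * γ s * γ t := by
  have hle : (-1:ℝ) ≤ 1 := by norm_num
  have h0m : (0:ℝ) ∈ Icc (-1:ℝ) 1 := by constructor <;> norm_num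
  have huIcc : uIcc (-1:ℝ) 1 = Icc (-1:ℝ) 1 := uIcc_of_le hle
  have hγ := saw_ae γ hγneg hγpos
  -- fixed-variable continuity
  have fixt : ∀ (F : ℝ → ℝ → ℝ), ContinuousOn (fun p : ℝ × ℝ => F p.1 p.2)
      (Icc (-1:ℝ) 1 ×ˢ Icc (-1:ℝ) 1) → ∀ s ∈ Icc (-1:ℝ) 1,
      ContinuousOn (fun t => F s t) (Icc (-1:ℝ) 1) := by
    intro F hF s hs
    exact hF.comp (continuous_const.prodMk continuous_id).continuousOn
      (fun t ht => ⟨hs, ht⟩)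
  have fixs : ∀ (F : ℝ → ℝ → ℝ), ContinuousOn (fun p : ℝ × ℝ => F p.1 p.2)
      (Icc (-1:ℝ) 1 ×ˢ Icc (-1:ℝ) 1) → ∀ t ∈ Icc (-1:ℝ) 1,
      ContinuousOn (fun s => F s t) (Icc (-1:ℝ) 1) := by
    intro F hF t ht
    exact hF.comp (continuous_id.prodMk continuous_const).continuousOn
      (fun s hs => ⟨hs, ht⟩)
  have one_bd : ∀ x ∈ Icc (-1:ℝ) 1, |(1:ℝ)| ≤ 1 := by intro x _; simp
  -- integrabilities on the box
  have hfI : Integrable (fun p : ℝ × ℝ => f p.1 p.2) (μ1.prod μ1) := by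
    simpa using box_int f hfC (fun _ => 1) (fun _ => 1) measurable_const measurable_const
      one_bd one_bd
  have hGI : Integrable (fun p : ℝ × ℝ => fs p.1 p.2 * saw p.1) (μ1.prod μ1) := by
    simpa using box_int fs hfsC saw (fun _ => 1) saw_meas measurable_const saw_bd one_bd
  have hPI : Integrable (fun p : ℝ × ℝ => fst p.1 p.2 * saw p.1 * saw p.2) (μ1.prod μ1) :=
    box_int fst hfstC saw saw saw_meas saw_meas saw_bd saw_bd
  have hGIswap : Integrable (fun p : ℝ × ℝ => fs p.2 p.1 * saw p.2) (μ1.prod μ1) := by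
    have := hGI.swap
    exact this
  -- Step 1: Fubini
  have step1 : (∫ s in (-1:ℝ)..1, ∫ t in (-1:ℝ)..1, f s t)
      = ∫ t in (-1:ℝ)..1, ∫ s in (-1:ℝ)..1, f s t := swap_box f hfI
  -- Step 2: key in s, per t
  have step2 : (∫ t in (-1:ℝ)..1, ∫ s in (-1:ℝ)..1, f s t)
      = ∫ t in (-1:ℝ)..1, (2 * f 0 t - ∫ s in (-1:ℝ)..1, fs s t * saw s) := by
    apply intervalIntegral.integral_congr
    intro t ht
    rw [huIcc] at ht
    exact key (fun s => f s t) (fun s => fs s t)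
      (fun s hs => hfs s hs t ht) (fixs fs hfsC t ht)
  -- integrable pieces for step 3
  have h2f : IntervalIntegrable (fun t => 2 * f 0 t) volume (-1) 1 := by
    apply ContinuousOn.intervalIntegrable
    rw [huIcc]
    exact (continuousOn_const.mul (fixt f hfC 0 h0m))
  have hH : IntervalIntegrable (fun t => ∫ s in (-1:ℝ)..1, fs s t * saw s) volume (-1) 1 :=
    marg_int (fun t s => fs s t * saw s) hGIswap
  -- Step 3: split
  have step3 : (∫ t in (-1:ℝ)..1, (2 * f 0 t - ∫ s in (-1:ℝ)..1, fs s t * saw s))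
      = 2 * (∫ t in (-1:ℝ)..1, f 0 t)
        - ∫ t in (-1:ℝ)..1, ∫ s in (-1:ℝ)..1, fs s t * saw s := by
    rw [intervalIntegral.integral_sub h2f hH, intervalIntegral.integral_const_mul]
  -- Step 4: key in t at s = 0
  have step4 : (∫ t in (-1:ℝ)..1, f 0 t)
      = 2 * f 0 0 - ∫ t in (-1:ℝ)..1, ft 0 t * saw t :=
    key (fun t => f 0 t) (fun t => ft 0 t) (fun t ht => hft 0 h0m t ht) (fixt ft hftC 0 h0m)
  -- Step 5: Fubini back
  have step5 : (∫ t in (-1:ℝ)..1, ∫ s in (-1:ℝ)..1, fs s t * saw s)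
      = ∫ s in (-1:ℝ)..1, ∫ t in (-1:ℝ)..1, fs s t * saw s :=
    (swap_box (fun t s => fs s t * saw s) hGIswap).trans rfl
  -- Step 6: key in t per s, pull out saw s
  have step6 : (∫ s in (-1:ℝ)..1, ∫ t in (-1:ℝ)..1, fs s t * saw s)
      = ∫ s in (-1:ℝ)..1,
          (2 * (fs s 0 * saw s) - ∫ t in (-1:ℝ)..1, fst s t * saw s * saw t) := by
    apply intervalIntegral.integral_congr
    intro s hs
    rw [huIcc] at hs
    have e1 : (∫ t in (-1:ℝ)..1, fs s t * saw s) = saw s * ∫ t in (-1:ℝ)..1, fs s t := by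
      rw [← intervalIntegral.integral_const_mul]
      apply intervalIntegral.integral_congr
      intro t _
      ring
    have e2 : (∫ t in (-1:ℝ)..1, fs s t)
        = 2 * fs s 0 - ∫ t in (-1:ℝ)..1, fst s t * saw t :=
      key (fun t => fs s t) (fun t => fst s t) (fun t ht => hfst s hs t ht)
        (fixt fst hfstC s hs)
    have e3 : saw s * (∫ t in (-1:ℝ)..1, fst s t * saw t)
        = ∫ t in (-1:ℝ)..1, fst s t * saw s * saw t := by
      rw [← intervalIntegral.integral_const_mul]
      apply intervalIntegral.integral_congr
      intro t _
      ring
    show (∫ t in (-1:ℝ)..1, fs s t * saw s)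
        = 2 * (fs s 0 * saw s) - ∫ t in (-1:ℝ)..1, fst s t * saw s * saw t
    rw [e1, e2, mul_sub, e3]
    congr 1
    ring
  -- integrable pieces for step 7
  have hA : IntervalIntegrable (fun s => 2 * (fs s 0 * saw s)) volume (-1) 1 := by
    have := line_int (fun s => 2 * fs s 0) (continuousOn_const.mul (fixs fs hfsC 0 h0m))
      saw saw_meas saw_bd
    apply this.congr
    intro s _
    show 2 * fs s 0 * saw s = 2 * (fs s 0 * saw s)
    ring
  have hK : IntervalIntegrable (fun s => ∫ t in (-1:ℝ)..1, fst s t * saw s * saw t)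
      volume (-1) 1 := marg_int (fun s t => fst s t * saw s * saw t) hPI
  -- Step 7: split outer
  have step7 : (∫ s in (-1:ℝ)..1,
        (2 * (fs s 0 * saw s) - ∫ t in (-1:ℝ)..1, fst s t * saw s * saw t))
      = 2 * (∫ s in (-1:ℝ)..1, fs s 0 * saw s)
        - ∫ s in (-1:ℝ)..1, ∫ t in (-1:ℝ)..1, fst s t * saw s * saw t := by
    rw [intervalIntegral.integral_sub hA hK]
    congr 1
    rw [← intervalIntegral.integral_const_mul]
  -- conversions saw → γ
  have conv1 : (∫ s in (-1:ℝ)..1, fs s 0 * γ s) = ∫ s in (-1:ℝ)..1, fs s 0 * saw s := by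
    apply intervalIntegral.integral_congr_ae
    filter_upwards [ae_ne_zero] with x hx _
    rw [hγ x hx]
  have conv2 : (∫ t in (-1:ℝ)..1, ft 0 t * γ t) = ∫ t in (-1:ℝ)..1, ft 0 t * saw t := by
    apply intervalIntegral.integral_congr_ae
    filter_upwards [ae_ne_zero] with x hx _
    rw [hγ x hx]
  have conv3 : (∫ s in (-1:ℝ)..1, ∫ t in (-1:ℝ)..1, fst s t * γ s * γ t)
      = ∫ s in (-1:ℝ)..1, ∫ t in (-1:ℝ)..1, fst s t * saw s * saw t := by
    apply intervalIntegral.integral_congr_ae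
    filter_upwards [ae_ne_zero] with s hs _
    apply intervalIntegral.integral_congr_ae
    filter_upwards [ae_ne_zero] with t ht _
    rw [hγ s hs, hγ t ht]
  rw [conv1, conv2, conv3, step1, step2, step3, step4, step5, step6, step7]
  ring
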